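/- Suppose (i) for every action a and aspect sequences ᾱ, β̄, if d(ᾱ,β̄) and a has aspect sequence β̄, then for all situations s, t, R_ᾱ(s,t) ↔ R_ᾱ(a(s),t); and (ii) for every fluent p and aspect sequence ᾱ, if p has aspect sequence ᾱ then there exists a predicate q on situations such that for all s, p(s) ↔ ∀t (R_ᾱ(s,t) → q(t)). Then the sequential non-interference axiom holds: for every fluent p, action a, and aspect sequences ᾱ, β̄, if p has aspect sequence ᾱ, a has aspect sequence β̄, and d(ᾱ,β̄), then the frame axiom F[a,p] holds. -/
import Mathlib

/-- `RSeq R αs s t` : `t` is an `αs`-aspect of `s`, where `αs` is a sequence of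
aspects; defined by composition, with the empty sequence giving the identity
relation and a one-element sequence `[α]` giving `R α`. -/
def RSeq {S A : Type*} (R : A → S → S → Prop) : List A → S → S → Prop
  | [], s, t => s = t
  | α :: rest, s, t => ∃ u : S, R α s u ∧ RSeq R rest u t

/-- Sequential relational formalism (universal version): the sequential
non-interference axiom follows from the two axioms. -/
theorem seq_relational_universal_noninterference
    {S A : Type*} (R : A → S → S → Prop) (d : List A → List A → Prop)
    (fluentAspect : (S → Prop) → List A → Prop)
    (actionAspect : (S → S) → List A → Prop)
    (h1 : ∀ (a : S → S) (αs βs : List A), d αs βs → actionAspect a βs →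
      ∀ s t : S, RSeq R αs s t ↔ RSeq R αs (a s) t)
    (h2 : ∀ (p : S → Prop) (αs : List A), fluentAspect p αs →
      ∃ q : S → Prop, ∀ s : S, p s ↔ ∀ t : S, RSeq R αs s t → q t) :
    ∀ (p : S → Prop) (a : S → S) (αs βs : List A),
      fluentAspect p αs → actionAspect a βs → d αs βs →
      ∀ s : S, p s ↔ p (a s) := by
  intro p a αs βs hf ha hd s
  obtain ⟨q, hq⟩ := h2 p αs hf
  rw [hq, hq]
  constructor
  · intro h t ht
    exact h t ((h1 a αs βs hd ha s t).mpr ht)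
  · intro h t ht
    exact h t ((h1 a αs βs hd ha s t).mp ht)
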